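/- Let τ > 0, C ∈ ℂ, N ≥ 2 an integer, and γ_n = (n/τ + C)^N for n ∈ ℤ. If 2τC is an integer and N is even, then for |n| sufficiently large there is a unique m ≠ n with γ_m = γ_n, namely m = -n - 2τC. -/

import Mathlib

theorem stmt_15 (τ : ℝ) (hτ : 0 < τ) (C : ℂ) (N : ℕ) (hN : 2 ≤ N) (hNe : Even N)
    (k : ℤ) (hk : (k : ℂ) = 2 * τ * C)
    (γ : ℤ → ℂ) (hγ : ∀ n : ℤ, γ n = ((n : ℂ) / τ + C) ^ N) :
    ∃ n₀ : ℕ, ∀ n : ℤ, n₀ ≤ n.natAbs →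
      ((-n - k ≠ n ∧ γ (-n - k) = γ n) ∧
        ∀ m : ℤ, m ≠ n → γ m = γ n → m = -n - k) := by
  have hτ0 : τ ≠ 0 := hτ.ne'
  have hτ0' : (τ : ℂ) ≠ 0 := by exact_mod_cast hτ0
  set c : ℝ := k / (2 * τ) with hc
  have hC : C = (c : ℂ) := by
    have : (c : ℂ) = (k : ℂ) / (2 * τ) := by push_cast [hc]; ring
    rw [this, hk]; field_simp
  have hkc : (k : ℝ) = 2 * τ * c := by rw [hc]; field_simp
  have hγ' : ∀ n : ℤ, γ n = ((((n : ℝ) / τ + c : ℝ)) : ℂ) ^ N := by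
    intro n; rw [hγ, hC]; push_cast; ring
  have hN0 : N ≠ 0 := by omega
  -- real pow equivalence
  have key : ∀ m n : ℤ, γ m = γ n ↔ (m = n ∨ m = -n - k) := by
    intro m n
    rw [hγ', hγ']
    constructor
    · intro h
      have h' : ((m : ℝ) / τ + c) ^ N = ((n : ℝ) / τ + c) ^ N := by
        exact_mod_cast h
      have habs : |(m : ℝ) / τ + c| = |(n : ℝ) / τ + c| := by
        have := hNe.pow_abs ((m : ℝ) / τ + c)
        have h2 := hNe.pow_abs ((n : ℝ) / τ + c)
        have : |(m : ℝ) / τ + c| ^ N = |(n : ℝ) / τ + c| ^ N := by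
          rw [this, h2, h']
        exact (pow_left_inj₀ (abs_nonneg _) (abs_nonneg _) hN0).mp this
      rcases abs_eq_abs.mp habs with h1 | h1
      · left
        have : (m : ℝ) = n := by
          field_simp at h1; linarith
        exact_mod_cast this
      · right
        have : (m : ℝ) = -n - k := by
          rw [hkc]; field_simp at h1 ⊢; linarith
        exact_mod_cast this
    · rintro (rfl | rfl)
      · rfl
      · have : ((-n - k : ℤ) : ℝ) / τ + c = -((n : ℝ) / τ + c) := by
          push_cast [hkc]; field_simp; ring
        rw [this]
        norm_cast
        rw [hNe.neg_pow]
  refine ⟨k.natAbs + 1, fun n hn => ⟨⟨?_, (key _ _).mpr (Or.inr rfl)⟩, fun m hm hgm => ?_⟩⟩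
  · intro h
    have : 2 * n = -k := by omega
    have := congrArg Int.natAbs this
    simp [Int.natAbs_mul] at this
    omega
  · rcases (key m n).mp hgm with h | h
    · exact absurd h hm
    · exact h
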